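/- Let 𝒜, ℬ ∈ ℂ^{n×n} be square complex matrices. Then the Hausdorff distance between their spectra satisfies d_H(𝒜, ℬ) ≤ ( ‖𝒜‖ + ‖ℬ‖ )^{1−1/n} · ‖𝒜 − ℬ‖^{1/n}, where ‖·‖ denotes the spectral norm. -/

import Mathlib

open Matrix

/-- Spectral norm (largest singular value) of a complex matrix. -/
noncomputable def specNormC {α β : Type*} [Fintype α] [Fintype β] [DecidableEq β]
    (M : Matrix α β ℂ) : ℝ :=
  ‖LinearMap.toContinuousLinearMap (Matrix.toEuclideanLin M)‖

open Polynomial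
open scoped ComplexOrder

variable {n : ℕ}

lemma aux_opNorm (M : Matrix (Fin n) (Fin n) ℂ) (v : EuclideanSpace ℂ (Fin n)) :
    ‖Matrix.toEuclideanLin M v‖ ≤ specNormC M * ‖v‖ :=
  (LinearMap.toContinuousLinearMap (Matrix.toEuclideanLin M)).le_opNorm v

lemma specNormC_nonneg (M : Matrix (Fin n) (Fin n) ℂ) : 0 ≤ specNormC M :=
  norm_nonneg _

lemma specNormC_sub_comm (A B : Matrix (Fin n) (Fin n) ℂ) :
    specNormC (A - B) = specNormC (B - A) := by
  unfold specNormC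
  rw [(neg_sub A B).symm, map_neg, map_neg, norm_neg]

lemma aux_toEL_smul_one (μ : ℂ) (w : EuclideanSpace ℂ (Fin n)) :
    Matrix.toEuclideanLin (μ • (1 : Matrix (Fin n) (Fin n) ℂ)) w = μ • w := by
  rw [Matrix.toEuclideanLin_apply, smul_mulVec, one_mulVec]
  rfl

noncomputable section Aux
variable {n : ℕ}

lemma aux_pow_card_le_prod (s : Multiset ℝ) (m : ℝ) (hm0 : 0 ≤ m)
    (h : ∀ x ∈ s, m ≤ x) : m ^ (Multiset.card s) ≤ s.prod := by
  induction s using Multiset.induction with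
  | empty => simp
  | cons a t ih =>
    rw [Multiset.prod_cons, Multiset.card_cons, pow_succ']
    exact mul_le_mul (h a (Multiset.mem_cons_self a t))
      (ih fun x hx => h x (Multiset.mem_cons_of_mem hx))
      (pow_nonneg hm0 _) (le_trans hm0 (h a (Multiset.mem_cons_self a t)))

lemma aux_exists_pow_card_le_prod (s : Multiset ℝ) (hs : s ≠ 0)
    (h0 : ∀ x ∈ s, 0 ≤ x) :
    ∃ r ∈ s, r ^ (Multiset.card s) ≤ s.prod := by
  have hne : s.toFinset.Nonempty := by
    obtain ⟨a, ha⟩ := Multiset.exists_mem_of_ne_zero hs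
    exact ⟨a, Multiset.mem_toFinset.2 ha⟩
  set m := s.toFinset.min' hne with hm
  have hmem : m ∈ s := Multiset.mem_toFinset.1 (s.toFinset.min'_mem hne)
  refine ⟨m, hmem, aux_pow_card_le_prod s m (h0 m hmem) fun x hx =>
    s.toFinset.min'_le x (Multiset.mem_toFinset.2 hx)⟩

lemma aux_eval_charpoly (M : Matrix (Fin n) (Fin n) ℂ) (μ : ℂ) :
    M.charpoly.eval μ = det (μ • (1 : Matrix (Fin n) (Fin n) ℂ) - M) := by
  rw [Matrix.charpoly, ← Polynomial.coe_evalRingHom, RingHom.map_det]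
  congr 1
  ext i j
  by_cases h : i = j
  · subst h; simp [charmatrix_apply_eq, Matrix.one_apply]
  · simp [charmatrix_apply_ne _ _ _ h, Matrix.one_apply, h]

lemma aux_eval_eq_prod (M : Matrix (Fin n) (Fin n) ℂ) (μ : ℂ) :
    M.charpoly.eval μ = (M.charpoly.roots.map (fun l => μ - l)).prod := by
  conv_lhs => rw [(IsAlgClosed.splits M.charpoly).eq_prod_roots_of_monic
    M.charpoly_monic]
  rw [eval_multiset_prod, Multiset.map_map]
  simp

lemma aux_card_roots (M : Matrix (Fin n) (Fin n) ℂ) :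
    Multiset.card M.charpoly.roots = n := by
  rw [(splits_iff_card_roots).1 (IsAlgClosed.splits _),
    Matrix.charpoly_natDegree_eq_dim, Fintype.card_fin]

end Aux



-- identity: quadratic form of Mᴴ*M
lemma quad_eq (M : Matrix (Fin n) (Fin n) ℂ) (y : Fin n → ℂ) :
    star y ⬝ᵥ ((Mᴴ * M) *ᵥ y) = star (M *ᵥ y) ⬝ᵥ (M *ᵥ y) := by
  rw [star_mulVec, ← Matrix.dotProduct_mulVec, mulVec_mulVec]

lemma star_dot_self (z : Fin n → ℂ) :
    star z ⬝ᵥ z = ((‖(WithLp.equiv 2 (Fin n → ℂ)).symm z‖ : ℝ) ^ 2 : ℝ) := by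
  have h := inner_self_eq_norm_sq_to_K (𝕜 := ℂ) ((WithLp.equiv 2 (Fin n → ℂ)).symm z)
  rw [dotProduct_comm]; push_cast; exact h

-- eigenvector basis image
lemma toEL_basis (H : Matrix (Fin n) (Fin n) ℂ) (hH : H.IsHermitian) (j : Fin n) :
    Matrix.toEuclideanLin H (hH.eigenvectorBasis j) = (hH.eigenvalues j : ℂ) • hH.eigenvectorBasis j := by
  have h := hH.mulVec_eigenvectorBasis j
  apply (WithLp.equiv 2 (Fin n → ℂ)).injective
  rw [show (WithLp.equiv 2 (Fin n → ℂ)) (Matrix.toEuclideanLin H (hH.eigenvectorBasis j)) = H *ᵥ (WithLp.equiv 2 (Fin n → ℂ)) (hH.eigenvectorBasis j) from rfl]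
  rw [show (WithLp.equiv 2 (Fin n → ℂ)) (hH.eigenvectorBasis j) = ⇑(hH.eigenvectorBasis j) from rfl, h]
  ext i
  simp [Complex.real_smul]

local notation "⟪" x ", " y "⟫" => @inner ℂ _ _ x y

lemma rayleigh_min (H : Matrix (Fin n) (Fin n) ℂ) (hH : H.IsHermitian)
    (x : EuclideanSpace ℂ (Fin n)) (i0 : Fin n)
    (hmin : ∀ i, hH.eigenvalues i0 ≤ hH.eigenvalues i) :
    hH.eigenvalues i0 * ‖x‖ ^ 2 ≤ Complex.re ⟪x, Matrix.toEuclideanLin H x⟫ := by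
  set b := hH.eigenvectorBasis
  set e := hH.eigenvalues
  have hsym : (Matrix.toEuclideanLin H).IsSymmetric := Matrix.isHermitian_iff_isSymmetric.1 hH
  have key : ∀ y : EuclideanSpace ℂ (Fin n), ∀ i : Fin n,
      ⟪b i, Matrix.toEuclideanLin H y⟫ = (e i : ℂ) * ⟪b i, y⟫ := by
    intro y i
    rw [← hsym (b i) y, toEL_basis H hH i, inner_smul_left, Complex.conj_ofReal]
  have expand : ⟪x, Matrix.toEuclideanLin H x⟫
      = ∑ i, (e i : ℂ) * (⟪x, b i⟫ * ⟪b i, x⟫) := by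
    rw [← b.sum_inner_mul_inner x (Matrix.toEuclideanLin H x)]
    refine Finset.sum_congr rfl fun i _ => ?_
    rw [key x i]; ring
  have habs : ∀ i : Fin n, ⟪x, b i⟫ * ⟪b i, x⟫ = (Complex.normSq ⟪b i, x⟫ : ℝ) := by
    intro i
    rw [← inner_conj_symm (b i) x, Complex.normSq_eq_conj_mul_self, Complex.conj_conj]
  have parseval : ∑ i, Complex.normSq ⟪b i, x⟫ = ‖x‖ ^ 2 := by
    have := b.sum_inner_mul_inner x x
    rw [inner_self_eq_norm_sq_to_K] at this
    have := congrArg Complex.re this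
    rw [Complex.re_sum] at this
    simp only [habs] at this
    norm_cast at this
  rw [expand, Complex.re_sum]
  simp only [habs]
  have : ∀ i : Fin n, Complex.re ((e i : ℂ) * (Complex.normSq ⟪b i, x⟫ : ℝ)) 
      = e i * Complex.normSq ⟪b i, x⟫ := by intro i; norm_cast
  simp only [this]
  calc e i0 * ‖x‖ ^ 2 = ∑ i, e i0 * Complex.normSq ⟪b i, x⟫ := by
        rw [← Finset.mul_sum, parseval]
    _ ≤ ∑ i, e i * Complex.normSq ⟪b i, x⟫ := by
        refine Finset.sum_le_sum fun i _ => ?_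
        exact mul_le_mul_of_nonneg_right (hmin i) (Complex.normSq_nonneg _)

lemma det_bound (M : Matrix (Fin n) (Fin n) ℂ) (c : ℝ)
    (hc : ∀ v : EuclideanSpace ℂ (Fin n), ‖Matrix.toEuclideanLin M v‖ ≤ c * ‖v‖)
    (x : EuclideanSpace ℂ (Fin n)) (hx : ‖x‖ = 1) :
    ‖det M‖ ≤ c ^ (n - 1) * ‖Matrix.toEuclideanLin M x‖ := by
  -- n ≥ 1
  rcases Nat.eq_zero_or_pos n with hn | hn
  · exfalso; subst hn
    have : x = 0 := Subsingleton.elim _ _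
    rw [this, norm_zero] at hx; exact zero_ne_one hx
  have hc0 : 0 ≤ c := by
    have := hc x; rw [hx, mul_one] at this
    exact le_trans (norm_nonneg _) this
  set H := Mᴴ * M with hHdef
  have hpsd : H.PosSemidef := Matrix.posSemidef_conjTranspose_mul_self M
  have hH : H.IsHermitian := hpsd.isHermitian
  set e := hH.eigenvalues with he
  have he0 : ∀ i, 0 ≤ e i := hpsd.eigenvalues_nonneg
  -- quadratic form is squared norm of Mv
  have hquad : ∀ v : EuclideanSpace ℂ (Fin n),
      Complex.re ⟪v, Matrix.toEuclideanLin H v⟫ = ‖Matrix.toEuclideanLin M v‖ ^ 2 := by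
    intro v
    have h1 : ⟪v, Matrix.toEuclideanLin H v⟫
        = star ((WithLp.equiv 2 (Fin n → ℂ)) v) ⬝ᵥ (H *ᵥ (WithLp.equiv 2 (Fin n → ℂ)) v) := by
      rw [EuclideanSpace.inner_eq_star_dotProduct, dotProduct_comm]; rfl
    rw [h1, quad_eq, star_dot_self]
    have : (WithLp.equiv 2 (Fin n → ℂ)).symm (M *ᵥ (WithLp.equiv 2 (Fin n → ℂ)) v)
        = Matrix.toEuclideanLin M v := rfl
    rw [this]; norm_cast
  -- eigenvalue upper bound
  have heC : ∀ i, e i ≤ c ^ 2 := by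
    intro i
    have h1 : e i = Complex.re ⟪hH.eigenvectorBasis i, Matrix.toEuclideanLin H (hH.eigenvectorBasis i)⟫ := by
      rw [toEL_basis H hH i, inner_smul_right, inner_self_eq_norm_sq_to_K]
      have hb1 : ‖hH.eigenvectorBasis i‖ = 1 := hH.eigenvectorBasis.orthonormal.1 i
      rw [hb1]; norm_num [he]
    rw [h1, hquad]
    have := hc (hH.eigenvectorBasis i)
    rw [hH.eigenvectorBasis.orthonormal.1 i, mul_one] at this
    exact pow_le_pow_left₀ (norm_nonneg _) this 2
  -- min eigenvalue
  obtain ⟨i0, -, hmin⟩ := Finset.exists_min_image Finset.univ e ⟨⟨0, hn⟩, Finset.mem_univ _⟩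
  have hray := rayleigh_min H hH x i0 (fun i => hmin i (Finset.mem_univ i))
  rw [hx, one_pow, mul_one, hquad] at hray
  -- determinant identity
  have hdet2 : ‖det M‖ ^ 2 = ∏ i, e i := by
    have h1 : det H = (∏ i, e i : ℝ) := by
      rw [hH.det_eq_prod_eigenvalues]; norm_cast
    have h2 : det H = starRingEnd ℂ (det M) * det M := by
      rw [hHdef, det_mul, det_conjTranspose]; rfl
    have h3 : ((‖det M‖ ^ 2 : ℝ) : ℂ) = ((∏ i, e i : ℝ) : ℂ) := by
      rw [← h1, h2, ← Complex.normSq_eq_conj_mul_self, Complex.sq_norm]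
    exact_mod_cast h3
  -- product bound
  have hprod : ∏ i, e i ≤ ‖Matrix.toEuclideanLin M x‖ ^ 2 * (c ^ 2) ^ (n - 1) := by
    rw [← Finset.mul_prod_erase Finset.univ e (Finset.mem_univ i0)]
    have h4 : ∏ i ∈ Finset.univ.erase i0, e i ≤ (c ^ 2) ^ (n - 1) := by
      have hcard : (Finset.univ.erase i0).card = n - 1 := by
        rw [Finset.card_erase_of_mem (Finset.mem_univ i0), Finset.card_univ, Fintype.card_fin]
      calc ∏ i ∈ Finset.univ.erase i0, e i ≤ ∏ _i ∈ Finset.univ.erase i0, c ^ 2 :=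
            Finset.prod_le_prod (fun i _ => he0 i) (fun i _ => heC i)
        _ = (c ^ 2) ^ (n - 1) := by rw [Finset.prod_const, hcard]
    exact mul_le_mul hray h4 (Finset.prod_nonneg fun i _ => he0 i)
      (le_trans (he0 i0) hray)
  -- conclude
  have hsq : ‖det M‖ ^ 2 ≤ (c ^ (n - 1) * ‖Matrix.toEuclideanLin M x‖) ^ 2 := by
    rw [hdet2]
    calc ∏ i, e i ≤ ‖Matrix.toEuclideanLin M x‖ ^ 2 * (c ^ 2) ^ (n - 1) := hprod
      _ = (c ^ (n - 1) * ‖Matrix.toEuclideanLin M x‖) ^ 2 := by ring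
  have h5 : 0 ≤ c ^ (n - 1) * ‖Matrix.toEuclideanLin M x‖ :=
    mul_nonneg (pow_nonneg hc0 _) (norm_nonneg _)
  exact (pow_le_pow_iff_left₀ (norm_nonneg _) h5 two_ne_zero).1 hsq


/-- The spectrum of a complex square matrix, as the multiset of roots of its
characteristic polynomial (eigenvalues with multiplicity). -/
noncomputable def spectrumMultiset {n : ℕ} (M : Matrix (Fin n) (Fin n) ℂ) : Multiset ℂ :=
  M.charpoly.roots

lemma key_lemma (A B : Matrix (Fin n) (Fin n) ℂ) (μ : ℂ) (hμ : μ ∈ spectrumMultiset B) :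
    sInf {s : ℝ | ∃ lam ∈ spectrumMultiset A, s = ‖lam - μ‖} ≤
      (specNormC A + specNormC B) ^ ((1 : ℝ) - 1 / n) *
        specNormC (A - B) ^ ((1 : ℝ) / n) := by
  set c := specNormC A + specNormC B with hc_def
  set d := specNormC (A - B) with hd_def
  have hc0 : 0 ≤ c := add_nonneg (specNormC_nonneg A) (specNormC_nonneg B)
  have hd0 : 0 ≤ d := specNormC_nonneg _
  -- n ≥ 1
  have hμ' : μ ∈ B.charpoly.roots := hμ
  have hn : 0 < n := by
    have hcB := aux_card_roots B
    have h2 : B.charpoly.roots ≠ 0 := fun h => by simp [h] at hμ'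
    have h3 := Multiset.card_pos.2 h2
    omega
  -- eigenvector
  have hdet0 : det (μ • (1 : Matrix (Fin n) (Fin n) ℂ) - B) = 0 := by
    rw [← aux_eval_charpoly]
    exact (Polynomial.mem_roots'.1 hμ').2
  obtain ⟨v, hv0, hv⟩ := (Matrix.exists_mulVec_eq_zero_iff).2 hdet0
  have hvB : B *ᵥ v = μ • v := by
    have h := hv
    rw [sub_mulVec, sub_eq_zero, smul_mulVec, one_mulVec] at h
    exact h.symm
  set x0 : EuclideanSpace ℂ (Fin n) := (WithLp.equiv 2 (Fin n → ℂ)).symm v with hx0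
  have hx0ne : x0 ≠ 0 := by
    intro h
    exact hv0 ((WithLp.equiv 2 (Fin n → ℂ)).symm.injective (by simpa [hx0] using h))
  have hx0norm : 0 < ‖x0‖ := norm_pos_iff.2 hx0ne
  have hBx0 : Matrix.toEuclideanLin B x0 = μ • x0 := by
    rw [hx0, WithLp.equiv_symm_apply, Matrix.toEuclideanLin_apply_piLp_toLp, hvB, WithLp.toLp_smul]
  -- |μ| ≤ ‖B‖
  have hμB : ‖μ‖ ≤ specNormC B := by
    have h1 := aux_opNorm B x0
    rw [hBx0, norm_smul] at h1
    have : ‖μ‖ = ‖μ‖ := rfl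
    rw [this] at h1
    exact le_of_mul_le_mul_right h1 hx0norm
  -- normalized eigenvector
  set x : EuclideanSpace ℂ (Fin n) := (‖x0‖⁻¹ : ℝ) • x0 with hx_def
  have hx1 : ‖x‖ = 1 := by
    rw [hx_def, norm_smul, norm_inv, norm_norm, inv_mul_cancel₀ (ne_of_gt hx0norm)]
  have hBx : Matrix.toEuclideanLin B x = μ • x := by
    rw [hx_def, LinearMap.map_smul_of_tower, hBx0, smul_comm]
  -- M := A - μ•1
  set M := A - μ • (1 : Matrix (Fin n) (Fin n) ℂ) with hM_def
  have hMw : ∀ w : EuclideanSpace ℂ (Fin n),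
      Matrix.toEuclideanLin M w = Matrix.toEuclideanLin A w - μ • w := by
    intro w
    rw [hM_def, map_sub, LinearMap.sub_apply, aux_toEL_smul_one]
  have hc_bound : ∀ w : EuclideanSpace ℂ (Fin n),
      ‖Matrix.toEuclideanLin M w‖ ≤ c * ‖w‖ := by
    intro w
    rw [hMw]
    calc ‖Matrix.toEuclideanLin A w - μ • w‖
        ≤ ‖Matrix.toEuclideanLin A w‖ + ‖μ • w‖ := norm_sub_le _ _
      _ ≤ specNormC A * ‖w‖ + ‖μ‖ * ‖w‖ := by
          refine add_le_add (aux_opNorm A w) ?_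
          rw [norm_smul]
      _ ≤ specNormC A * ‖w‖ + specNormC B * ‖w‖ :=
          add_le_add_right (mul_le_mul_of_nonneg_right hμB (norm_nonneg _)) _
      _ = c * ‖w‖ := by rw [hc_def]; ring
  -- M x = (A - B) x
  have hMx : Matrix.toEuclideanLin M x = Matrix.toEuclideanLin (A - B) x := by
    rw [hMw, map_sub, LinearMap.sub_apply, ← hBx]
  have hMx_norm : ‖Matrix.toEuclideanLin M x‖ ≤ d := by
    rw [hMx]
    calc ‖Matrix.toEuclideanLin (A - B) x‖ ≤ d * ‖x‖ := aux_opNorm _ _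
      _ = d := by rw [hx1, mul_one]
  -- determinant bound
  have hdet_le : ‖det M‖ ≤ c ^ (n - 1) * d := by
    calc ‖det M‖ ≤ c ^ (n - 1) * ‖Matrix.toEuclideanLin M x‖ :=
          det_bound M c hc_bound x hx1
      _ ≤ c ^ (n - 1) * d :=
          mul_le_mul_of_nonneg_left hMx_norm (pow_nonneg hc0 _)
  -- |det M| = product of |λ - μ|
  set s : Multiset ℝ := A.charpoly.roots.map (fun l => ‖l - μ‖) with hs_def
  have hprod : s.prod = ‖det M‖ := by
    have h1 : det (μ • (1 : Matrix (Fin n) (Fin n) ℂ) - A)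
        = (A.charpoly.roots.map (fun l => μ - l)).prod := by
      rw [← aux_eval_charpoly, aux_eval_eq_prod]
    have h2 : ‖det M‖ = ‖det (μ • (1 : Matrix (Fin n) (Fin n) ℂ) - A)‖ := by
      rw [hM_def, show μ • (1 : Matrix (Fin n) (Fin n) ℂ) - A
        = -(A - μ • (1 : Matrix (Fin n) (Fin n) ℂ)) from (neg_sub _ _).symm, det_neg, norm_mul]
      simp
    rw [h2, h1, show ‖(A.charpoly.roots.map (fun l => μ - l)).prod‖
      = normHom (α := ℂ) (A.charpoly.roots.map (fun l => μ - l)).prod from rfl,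
      ← Multiset.prod_hom _ (normHom (α := ℂ)), Multiset.map_map]
    congr 1
    apply Multiset.map_congr rfl
    intro l _
    simp [norm_sub_rev]
  have hcard : Multiset.card s = n := by
    rw [hs_def, Multiset.card_map, aux_card_roots]
  have hs_ne : s ≠ 0 := by
    rw [← Multiset.card_pos, hcard]; exact hn
  have hs_nonneg : ∀ r ∈ s, 0 ≤ r := by
    intro r hr
    obtain ⟨l, _, rfl⟩ := Multiset.mem_map.1 hr
    exact norm_nonneg _
  obtain ⟨r, hrs, hrpow⟩ := aux_exists_pow_card_le_prod s hs_ne hs_nonneg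
  rw [hcard] at hrpow
  rw [hprod] at hrpow
  have hr_le : r ^ n ≤ c ^ (n - 1) * d := le_trans hrpow hdet_le
  have hr0 : 0 ≤ r := hs_nonneg r hrs
  -- rpow conclusion
  have hRHS0 : 0 ≤ c ^ ((1 : ℝ) - 1 / n) * d ^ ((1 : ℝ) / n) :=
    mul_nonneg (Real.rpow_nonneg hc0 _) (Real.rpow_nonneg hd0 _)
  have hRHSpow : (c ^ ((1 : ℝ) - 1 / n) * d ^ ((1 : ℝ) / n)) ^ n = c ^ (n - 1) * d := by
    have hnne : (n : ℝ) ≠ 0 := Nat.cast_ne_zero.2 (Nat.pos_iff_ne_zero.1 hn)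
    rw [mul_pow, ← Real.rpow_natCast (c ^ ((1 : ℝ) - 1 / n)) n,
      ← Real.rpow_natCast (d ^ ((1 : ℝ) / n)) n,
      ← Real.rpow_mul hc0, ← Real.rpow_mul hd0]
    have e1 : ((1 : ℝ) - 1 / n) * n = (n : ℝ) - 1 := by field_simp
    have e2 : ((1 : ℝ) / n) * n = 1 := by field_simp
    rw [e1, e2, Real.rpow_one]
    congr 1
    rw [show ((n : ℝ) - 1) = ((n - 1 : ℕ) : ℝ) by
      rw [Nat.cast_sub hn]; norm_num, Real.rpow_natCast]
  have hr_final : r ≤ c ^ ((1 : ℝ) - 1 / n) * d ^ ((1 : ℝ) / n) := by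
    have := hRHSpow ▸ hr_le
    exact (pow_le_pow_iff_left₀ hr0 hRHS0 (Nat.pos_iff_ne_zero.1 hn)).1 this
  -- sInf ≤ r
  refine le_trans (csInf_le ?_ ?_) hr_final
  · exact ⟨0, fun t ht => by
      obtain ⟨l, _, rfl⟩ := ht
      exact norm_nonneg _⟩
  · obtain ⟨l, hl, rfl⟩ := Multiset.mem_map.1 hrs
    exact ⟨l, hl, rfl⟩


/-- The spectrum variation of `B` with respect to `A`:
`sv_A(B) = max_j min_i |λ_i(A) − μ_j(B)|`. -/
noncomputable def specVariation {n : ℕ} (A B : Matrix (Fin n) (Fin n) ℂ) : ℝ :=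
  sSup {r : ℝ | ∃ μ ∈ spectrumMultiset B,
    r = sInf {s : ℝ | ∃ lam ∈ spectrumMultiset A, s = ‖lam - μ‖}}

/-- Hausdorff distance between the spectra of `A` and `B`. -/
noncomputable def hausdorffSpecDist {n : ℕ} (A B : Matrix (Fin n) (Fin n) ℂ) : ℝ :=
  max (specVariation A B) (specVariation B A)

/-- Elsner's bound: for `𝒜, ℬ ∈ ℂ^{n×n}`,
`d_H(𝒜, ℬ) ≤ (‖𝒜‖ + ‖ℬ‖)^{1−1/n} ‖𝒜 − ℬ‖^{1/n}`. -/
theorem hausdorffSpecDist_le {n : ℕ} (A B : Matrix (Fin n) (Fin n) ℂ) :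
    hausdorffSpecDist A B ≤
      (specNormC A + specNormC B) ^ ((1 : ℝ) - 1 / n) *
        specNormC (A - B) ^ ((1 : ℝ) / n) := by

  have hRHS0 : 0 ≤ (specNormC A + specNormC B) ^ ((1 : ℝ) - 1 / n) *
      specNormC (A - B) ^ ((1 : ℝ) / n) :=
    mul_nonneg (Real.rpow_nonneg (add_nonneg (specNormC_nonneg A) (specNormC_nonneg B)) _)
      (Real.rpow_nonneg (specNormC_nonneg _) _)
  refine max_le ?_ ?_
  · refine Real.sSup_le ?_ hRHS0
    rintro r ⟨μ, hμ, rfl⟩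
    exact key_lemma A B μ hμ
  · refine Real.sSup_le ?_ hRHS0
    rintro r ⟨μ, hμ, rfl⟩
    have h := key_lemma B A μ hμ
    rwa [add_comm (specNormC B) (specNormC A), specNormC_sub_comm B A] at h
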